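/- Let A = {a ∈ {0,1}⁵ : a_1 + a_2 + a_3 + a_4 + a_5 is even}. For x ∈ ℝ⁶ (coordinates x_1,…,x_6) and a ∈ A set a(x) = Σ_{j=1}^{5} (−1)^{a_j} x_j. Suppose x ≠ 0, x_1 ≥ x_2 ≥ x_3 ≥ x_4 ≥ |x_5|, and a(x) ≤ 3x_6 for all a ∈ A. Then #{a ∈ A : a(x) < 3x_6} ∈ {8, 11, 12, 13, 14, 15, 16}. Moreover each of these seven values is attained for some such x. -/

import Mathlib

/-- The index set A ⊆ {0,1}⁵ of tuples with an even number of ones. -/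
def A5 : Finset (Fin 5 → Bool) :=
  Finset.univ.filter (fun a => Even ((Finset.univ.filter (fun j => a j)).card))

/-- a(x) = Σ_{j=1}^{5} (−1)^{a_j} x_j for x ∈ ℝ⁶. -/
noncomputable def aval (a : Fin 5 → Bool) (x : Fin 6 → ℝ) : ℝ :=
  ∑ j : Fin 5, (if a j then (-1 : ℝ) else 1) * x (Fin.castSucc j)

/-- A5 as an explicit finset. -/
def A5' : Finset (Fin 5 → Bool) :=
  {![false,false,false,false,false], ![false,false,false,true,true], ![false,false,true,false,true], ![false,false,true,true,false], ![false,true,false,false,true], ![false,true,false,true,false], ![false,true,true,false,false], ![false,true,true,true,true], ![true,false,false,false,true], ![true,false,false,true,false], ![true,false,true,false,false], ![true,false,true,true,true], ![true,true,false,false,false], ![true,true,false,true,true], ![true,true,true,false,true], ![true,true,true,true,false]}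

lemma A5_eq : A5 = A5' := by decide

lemma aval_eq (a : Fin 5 → Bool) (x : Fin 6 → ℝ) :
    aval a x = (if a 0 then -1 else 1) * x 0 + (if a 1 then -1 else 1) * x 1
      + (if a 2 then -1 else 1) * x 2 + (if a 3 then -1 else 1) * x 3
      + (if a 4 then -1 else 1) * x 4 := by
  have e0 : (Fin.castSucc (0 : Fin 5)) = (0 : Fin 6) := rfl
  have e1 : (Fin.castSucc (1 : Fin 5)) = (1 : Fin 6) := rfl
  have e2 : (Fin.castSucc (2 : Fin 5)) = (2 : Fin 6) := rfl
  have e3 : (Fin.castSucc (3 : Fin 5)) = (3 : Fin 6) := rfl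
  have e4 : (Fin.castSucc (4 : Fin 5)) = (4 : Fin 6) := rfl
  simp [aval, Fin.sum_univ_five, e0, e1, e2, e3, e4]

lemma card_split (x : Fin 6 → ℝ) (hle : ∀ a ∈ A5, aval a x ≤ 3 * x 5) :
    (A5.filter (fun a => aval a x < 3 * x 5)).card
      + (A5.filter (fun a => aval a x = 3 * x 5)).card = 16 := by
  have hcongr : A5.filter (fun a => ¬ aval a x < 3 * x 5)
      = A5.filter (fun a => aval a x = 3 * x 5) :=
    Finset.filter_congr (fun a ha => by
      have h := hle a ha
      constructor
      · intro h'; exact le_antisymm h (not_lt.mp h')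
      · intro h'; rw [h']; exact lt_irrefl _)
  have h := Finset.card_filter_add_card_filter_not
    (s := A5) (p := fun a => aval a x < 3 * x 5)
  rw [hcongr] at h
  have : A5.card = 16 := by decide
  omega

set_option maxHeartbeats 2000000 in
/-- Part 1: membership. -/
lemma main_mem (x : Fin 6 → ℝ) (hx : x ≠ 0)
    (h1 : x 1 ≤ x 0) (h2 : x 2 ≤ x 1) (h3 : x 3 ≤ x 2) (h4 : |x 4| ≤ x 3)
    (hle : ∀ a ∈ A5, aval a x ≤ 3 * x 5) :
    (A5.filter (fun a => aval a x < 3 * x 5)).card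
      ∈ ({8, 11, 12, 13, 14, 15, 16} : Finset ℕ) := by
  obtain ⟨h4b, h4a⟩ := abs_le.mp h4
  have h3nn : (0 : ℝ) ≤ x 3 := le_trans (abs_nonneg _) h4
  have hle0 : x 0 + x 1 + x 2 + x 3 + x 4 ≤ 3 * x 5 := by
    have := hle ![false,false,false,false,false] (by decide)
    norm_num [aval_eq, Matrix.cons_val_two, Matrix.cons_val_three, Matrix.cons_val_four] at this
    linarith
  have hsplit := card_split x hle
  have hcard16 : (A5.filter (fun a => aval a x < 3 * x 5)).card ≤ 16 := by omega
  simp only [Finset.mem_insert, Finset.mem_singleton]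
  rcases (show (0:ℝ) ≤ x 3 + x 4 by linarith).lt_or_eq with hc | hc
  · -- x 3 + x 4 > 0 : equality set ⊆ {allfalse}
    have hsub : A5.filter (fun a => aval a x = 3 * x 5)
        ⊆ {![false,false,false,false,false]} := by
      intro a ha
      rw [Finset.mem_filter] at ha
      obtain ⟨haA, hv⟩ := ha
      rw [A5_eq] at haA
      fin_cases haA <;> first | decide | (exfalso; norm_num [aval_eq, Matrix.cons_val_two, Matrix.cons_val_three, Matrix.cons_val_four] at hv; linarith)
    have hE := Finset.card_le_card hsub
    simp only [Finset.card_singleton] at hE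
    omega
  · -- x 3 + x 4 = 0
    have hx43 : x 4 = -x 3 := by linarith
    rcases h3nn.lt_or_eq with hx3 | hx3
    · -- 0 < x 3 : equality set ⊆ 5 explicit elements
      have hsub : A5.filter (fun a => aval a x = 3 * x 5)
          ⊆ {![false,false,false,false,false], ![false,false,false,true,true], ![false,false,true,false,true], ![false,true,false,false,true], ![true,false,false,false,true]} := by
        intro a ha
        rw [Finset.mem_filter] at ha
        obtain ⟨haA, hv⟩ := ha
        rw [A5_eq] at haA
        fin_cases haA <;> first | decide | (exfalso; norm_num [aval_eq, Matrix.cons_val_two, Matrix.cons_val_three, Matrix.cons_val_four] at hv; linarith)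
      have hE := Finset.card_le_card hsub
      have h5 : ({![false,false,false,false,false], ![false,false,false,true,true], ![false,false,true,false,true], ![false,true,false,false,true], ![true,false,false,false,true]} : Finset (Fin 5 → Bool)).card = 5 := by decide
      rw [h5] at hE
      omega
    · -- x 3 = 0, hence x 4 = 0
      have hx3' : x 3 = 0 := hx3.symm
      have hx4' : x 4 = 0 := by rw [hx3'] at hx43; simpa using hx43
      rcases (show (0:ℝ) ≤ x 2 by linarith).lt_or_eq with hx2 | hx2
      · -- 0 < x 2 : equality set ⊆ 2 explicit elements
        have hsub : A5.filter (fun a => aval a x = 3 * x 5)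
            ⊆ {![false,false,false,false,false], ![false,false,false,true,true]} := by
          intro a ha
          rw [Finset.mem_filter] at ha
          obtain ⟨haA, hv⟩ := ha
          rw [A5_eq] at haA
          fin_cases haA <;>
            first
              | decide
              | (exfalso; norm_num [aval_eq, Matrix.cons_val_two, Matrix.cons_val_three, Matrix.cons_val_four, hx3', hx4'] at hv; linarith)
        have hE := Finset.card_le_card hsub
        have h2' : ({![false,false,false,false,false], ![false,false,false,true,true]} : Finset (Fin 5 → Bool)).card = 2 := by decide
        rw [h2'] at hE
        omega
      · have hx2' : x 2 = 0 := hx2.symm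
        rcases (show (0:ℝ) ≤ x 1 by linarith).lt_or_eq with hx1 | hx1
        · -- 0 < x 1 : equality set ⊆ 4 explicit elements
          have hsub : A5.filter (fun a => aval a x = 3 * x 5)
              ⊆ {![false,false,false,false,false], ![false,false,true,true,false], ![false,false,true,false,true], ![false,false,false,true,true]} := by
            intro a ha
            rw [Finset.mem_filter] at ha
            obtain ⟨haA, hv⟩ := ha
            rw [A5_eq] at haA
            fin_cases haA <;>
              first
                | decide
                | (exfalso; norm_num [aval_eq, Matrix.cons_val_two, Matrix.cons_val_three, Matrix.cons_val_four, hx2', hx3', hx4'] at hv; linarith)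
          have hE := Finset.card_le_card hsub
          have h4' : ({![false,false,false,false,false], ![false,false,true,true,false], ![false,false,true,false,true], ![false,false,false,true,true]} : Finset (Fin 5 → Bool)).card = 4 := by decide
          rw [h4'] at hE
          omega
        · have hx1' : x 1 = 0 := hx1.symm
          rcases (show (0:ℝ) ≤ x 0 by linarith).lt_or_eq with hx0 | hx0
          · -- 0 < x 0
            have hx0le : x 0 ≤ 3 * x 5 := by linarith
            rcases hx0le.lt_or_eq with hlt | heq
            · -- x 0 < 3 x 5 : equality set empty
              have hF : A5.filter (fun a => aval a x = 3 * x 5) = ∅ := by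
                rw [Finset.eq_empty_iff_forall_notMem]
                intro a ha
                rw [Finset.mem_filter] at ha
                obtain ⟨haA, hv⟩ := ha
                rw [A5_eq] at haA
                fin_cases haA <;>
                  norm_num [aval_eq, Matrix.cons_val_two, Matrix.cons_val_three, Matrix.cons_val_four, hx1', hx2', hx3', hx4'] at hv <;> linarith
              rw [hF] at hsplit
              simp at hsplit
              omega
            · -- x 0 = 3 x 5 : equality set has 8 elements
              have hF : A5.filter (fun a => aval a x = 3 * x 5)
                  = {![false,false,false,false,false], ![false,false,false,true,true], ![false,false,true,false,true], ![false,false,true,true,false], ![false,true,false,false,true], ![false,true,false,true,false], ![false,true,true,false,false], ![false,true,true,true,true]} := by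
                apply Finset.Subset.antisymm
                · intro a ha
                  rw [Finset.mem_filter] at ha
                  obtain ⟨haA, hv⟩ := ha
                  rw [A5_eq] at haA
                  fin_cases haA <;>
                    first
                      | decide
                      | (exfalso; norm_num [aval_eq, Matrix.cons_val_two, Matrix.cons_val_three, Matrix.cons_val_four, hx1', hx2', hx3', hx4'] at hv; linarith)
                · intro a ha
                  fin_cases ha <;>
                    (rw [Finset.mem_filter]
                     refine ⟨by decide, ?_⟩
                     norm_num [aval_eq, Matrix.cons_val_two, Matrix.cons_val_three, Matrix.cons_val_four, hx1', hx2', hx3', hx4']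
                     linarith)
              rw [hF] at hsplit
              have h8 : ({![false,false,false,false,false], ![false,false,false,true,true], ![false,false,true,false,true], ![false,false,true,true,false], ![false,true,false,false,true], ![false,true,false,true,false], ![false,true,true,false,false], ![false,true,true,true,true]} : Finset (Fin 5 → Bool)).card = 8 := by decide
              rw [h8] at hsplit
              omega
          · -- x 0 = 0 : all of x 0 .. x 4 vanish
            have hx0' : x 0 = 0 := hx0.symm
            have hx5 : x 5 ≠ 0 := by
              intro h5
              apply hx
              funext i
              match i with
              | 0 => exact hx0'
              | 1 => exact hx1'
              | 2 => exact hx2'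
              | 3 => exact hx3'
              | 4 => exact hx4'
              | 5 => exact h5
            have h5pos : 0 < 3 * x 5 := by
              rcases (show (0:ℝ) ≤ 3 * x 5 by linarith).lt_or_eq with h | h
              · exact h
              · exfalso; apply hx5; linarith
            have hF : A5.filter (fun a => aval a x = 3 * x 5) = ∅ := by
              rw [Finset.eq_empty_iff_forall_notMem]
              intro a ha
              rw [Finset.mem_filter] at ha
              have hv := ha.2
              rw [aval_eq, hx0', hx1', hx2', hx3', hx4'] at hv
              simp at hv
              linarith
            rw [hF] at hsplit
            simp at hsplit
            omega

set_option maxHeartbeats 1000000 in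
lemma wit8 : ∃ y : Fin 6 → ℝ, y ≠ 0 ∧
    y 1 ≤ y 0 ∧ y 2 ≤ y 1 ∧ y 3 ≤ y 2 ∧ |y 4| ≤ y 3 ∧
    (∀ a ∈ A5, aval a y ≤ 3 * y 5) ∧
    (A5.filter (fun a => aval a y < 3 * y 5)).card = 8 := by
  use ![1,0,0,0,0,(1/3)]
  have h4 : (![1,0,0,0,0,(1/3)] : Fin 6 → ℝ) 4 = 0 := rfl
  have h5 : (![1,0,0,0,0,(1/3)] : Fin 6 → ℝ) 5 = (1/3) := rfl
  have hle : ∀ a ∈ A5, aval a ![1,0,0,0,0,(1/3)] ≤ 3 * (![1,0,0,0,0,(1/3)] : Fin 6 → ℝ) 5 := by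
    intro a ha; rw [A5_eq] at ha; fin_cases ha <;> norm_num [aval_eq, Matrix.cons_val_two, Matrix.cons_val_three, Matrix.cons_val_four, h5]
  refine ⟨?_, by norm_num, by norm_num [Matrix.cons_val_two, Matrix.cons_val_three, Matrix.cons_val_four], by norm_num [Matrix.cons_val_two, Matrix.cons_val_three, Matrix.cons_val_four], by rw [h4]; norm_num [Matrix.cons_val_two, Matrix.cons_val_three, Matrix.cons_val_four], hle, ?_⟩
  · intro h; have := congrFun h 0; rw [show (![1,0,0,0,0,(1/3)] : Fin 6 → ℝ) 0 = 1 from rfl] at this; norm_num at this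
  · have hsplit := card_split _ hle
    have hF : A5.filter (fun a => aval a ![1,0,0,0,0,(1/3)] = 3 * (![1,0,0,0,0,(1/3)] : Fin 6 → ℝ) 5)
        = {![false,false,false,false,false], ![false,false,false,true,true], ![false,false,true,false,true], ![false,false,true,true,false], ![false,true,false,false,true], ![false,true,false,true,false], ![false,true,true,false,false], ![false,true,true,true,true]} := by
      apply Finset.Subset.antisymm
      · intro a ha
        rw [Finset.mem_filter] at ha
        obtain ⟨haA, hv⟩ := ha
        rw [A5_eq] at haA
        fin_cases haA <;>
          first
            | decide
            | (exfalso; norm_num [aval_eq, Matrix.cons_val_two, Matrix.cons_val_three, Matrix.cons_val_four, h5] at hv)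
      · intro a ha
        fin_cases ha <;> (rw [Finset.mem_filter]; refine ⟨by decide, ?_⟩; norm_num [aval_eq, Matrix.cons_val_two, Matrix.cons_val_three, Matrix.cons_val_four, h5])
    rw [hF] at hsplit
    have hFc : ({![false,false,false,false,false], ![false,false,false,true,true], ![false,false,true,false,true], ![false,false,true,true,false], ![false,true,false,false,true], ![false,true,false,true,false], ![false,true,true,false,false], ![false,true,true,true,true]} : Finset (Fin 5 → Bool)).card = 8 := by decide
    omega

set_option maxHeartbeats 1000000 in
lemma wit11 : ∃ y : Fin 6 → ℝ, y ≠ 0 ∧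
    y 1 ≤ y 0 ∧ y 2 ≤ y 1 ∧ y 3 ≤ y 2 ∧ |y 4| ≤ y 3 ∧
    (∀ a ∈ A5, aval a y ≤ 3 * y 5) ∧
    (A5.filter (fun a => aval a y < 3 * y 5)).card = 11 := by
  use ![1,1,1,1,-1,1]
  have h4 : (![1,1,1,1,-1,1] : Fin 6 → ℝ) 4 = -1 := rfl
  have h5 : (![1,1,1,1,-1,1] : Fin 6 → ℝ) 5 = 1 := rfl
  have hle : ∀ a ∈ A5, aval a ![1,1,1,1,-1,1] ≤ 3 * (![1,1,1,1,-1,1] : Fin 6 → ℝ) 5 := by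
    intro a ha; rw [A5_eq] at ha; fin_cases ha <;> norm_num [aval_eq, Matrix.cons_val_two, Matrix.cons_val_three, Matrix.cons_val_four, h5]
  refine ⟨?_, by norm_num, by norm_num [Matrix.cons_val_two, Matrix.cons_val_three, Matrix.cons_val_four], by norm_num [Matrix.cons_val_two, Matrix.cons_val_three, Matrix.cons_val_four], by rw [h4]; norm_num [Matrix.cons_val_two, Matrix.cons_val_three, Matrix.cons_val_four], hle, ?_⟩
  · intro h; have := congrFun h 0; rw [show (![1,1,1,1,-1,1] : Fin 6 → ℝ) 0 = 1 from rfl] at this; norm_num at this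
  · have hsplit := card_split _ hle
    have hF : A5.filter (fun a => aval a ![1,1,1,1,-1,1] = 3 * (![1,1,1,1,-1,1] : Fin 6 → ℝ) 5)
        = {![false,false,false,false,false], ![false,false,false,true,true], ![false,false,true,false,true], ![false,true,false,false,true], ![true,false,false,false,true]} := by
      apply Finset.Subset.antisymm
      · intro a ha
        rw [Finset.mem_filter] at ha
        obtain ⟨haA, hv⟩ := ha
        rw [A5_eq] at haA
        fin_cases haA <;>
          first
            | decide
            | (exfalso; norm_num [aval_eq, Matrix.cons_val_two, Matrix.cons_val_three, Matrix.cons_val_four, h5] at hv)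
      · intro a ha
        fin_cases ha <;> (rw [Finset.mem_filter]; refine ⟨by decide, ?_⟩; norm_num [aval_eq, Matrix.cons_val_two, Matrix.cons_val_three, Matrix.cons_val_four, h5])
    rw [hF] at hsplit
    have hFc : ({![false,false,false,false,false], ![false,false,false,true,true], ![false,false,true,false,true], ![false,true,false,false,true], ![true,false,false,false,true]} : Finset (Fin 5 → Bool)).card = 5 := by decide
    omega

set_option maxHeartbeats 1000000 in
lemma wit12 : ∃ y : Fin 6 → ℝ, y ≠ 0 ∧
    y 1 ≤ y 0 ∧ y 2 ≤ y 1 ∧ y 3 ≤ y 2 ∧ |y 4| ≤ y 3 ∧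
    (∀ a ∈ A5, aval a y ≤ 3 * y 5) ∧
    (A5.filter (fun a => aval a y < 3 * y 5)).card = 12 := by
  use ![3,1,1,1,-1,(5/3)]
  have h4 : (![3,1,1,1,-1,(5/3)] : Fin 6 → ℝ) 4 = -1 := rfl
  have h5 : (![3,1,1,1,-1,(5/3)] : Fin 6 → ℝ) 5 = (5/3) := rfl
  have hle : ∀ a ∈ A5, aval a ![3,1,1,1,-1,(5/3)] ≤ 3 * (![3,1,1,1,-1,(5/3)] : Fin 6 → ℝ) 5 := by
    intro a ha; rw [A5_eq] at ha; fin_cases ha <;> norm_num [aval_eq, Matrix.cons_val_two, Matrix.cons_val_three, Matrix.cons_val_four, h5]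
  refine ⟨?_, by norm_num, by norm_num [Matrix.cons_val_two, Matrix.cons_val_three, Matrix.cons_val_four], by norm_num [Matrix.cons_val_two, Matrix.cons_val_three, Matrix.cons_val_four], by rw [h4]; norm_num [Matrix.cons_val_two, Matrix.cons_val_three, Matrix.cons_val_four], hle, ?_⟩
  · intro h; have := congrFun h 0; rw [show (![3,1,1,1,-1,(5/3)] : Fin 6 → ℝ) 0 = 3 from rfl] at this; norm_num at this
  · have hsplit := card_split _ hle
    have hF : A5.filter (fun a => aval a ![3,1,1,1,-1,(5/3)] = 3 * (![3,1,1,1,-1,(5/3)] : Fin 6 → ℝ) 5)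
        = {![false,false,false,false,false], ![false,false,false,true,true], ![false,false,true,false,true], ![false,true,false,false,true]} := by
      apply Finset.Subset.antisymm
      · intro a ha
        rw [Finset.mem_filter] at ha
        obtain ⟨haA, hv⟩ := ha
        rw [A5_eq] at haA
        fin_cases haA <;>
          first
            | decide
            | (exfalso; norm_num [aval_eq, Matrix.cons_val_two, Matrix.cons_val_three, Matrix.cons_val_four, h5] at hv)
      · intro a ha
        fin_cases ha <;> (rw [Finset.mem_filter]; refine ⟨by decide, ?_⟩; norm_num [aval_eq, Matrix.cons_val_two, Matrix.cons_val_three, Matrix.cons_val_four, h5])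
    rw [hF] at hsplit
    have hFc : ({![false,false,false,false,false], ![false,false,false,true,true], ![false,false,true,false,true], ![false,true,false,false,true]} : Finset (Fin 5 → Bool)).card = 4 := by decide
    omega

set_option maxHeartbeats 1000000 in
lemma wit13 : ∃ y : Fin 6 → ℝ, y ≠ 0 ∧
    y 1 ≤ y 0 ∧ y 2 ≤ y 1 ∧ y 3 ≤ y 2 ∧ |y 4| ≤ y 3 ∧
    (∀ a ∈ A5, aval a y ≤ 3 * y 5) ∧
    (A5.filter (fun a => aval a y < 3 * y 5)).card = 13 := by
  use ![3,3,1,1,-1,(7/3)]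
  have h4 : (![3,3,1,1,-1,(7/3)] : Fin 6 → ℝ) 4 = -1 := rfl
  have h5 : (![3,3,1,1,-1,(7/3)] : Fin 6 → ℝ) 5 = (7/3) := rfl
  have hle : ∀ a ∈ A5, aval a ![3,3,1,1,-1,(7/3)] ≤ 3 * (![3,3,1,1,-1,(7/3)] : Fin 6 → ℝ) 5 := by
    intro a ha; rw [A5_eq] at ha; fin_cases ha <;> norm_num [aval_eq, Matrix.cons_val_two, Matrix.cons_val_three, Matrix.cons_val_four, h5]
  refine ⟨?_, by norm_num, by norm_num [Matrix.cons_val_two, Matrix.cons_val_three, Matrix.cons_val_four], by norm_num [Matrix.cons_val_two, Matrix.cons_val_three, Matrix.cons_val_four], by rw [h4]; norm_num [Matrix.cons_val_two, Matrix.cons_val_three, Matrix.cons_val_four], hle, ?_⟩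
  · intro h; have := congrFun h 0; rw [show (![3,3,1,1,-1,(7/3)] : Fin 6 → ℝ) 0 = 3 from rfl] at this; norm_num at this
  · have hsplit := card_split _ hle
    have hF : A5.filter (fun a => aval a ![3,3,1,1,-1,(7/3)] = 3 * (![3,3,1,1,-1,(7/3)] : Fin 6 → ℝ) 5)
        = {![false,false,false,false,false], ![false,false,false,true,true], ![false,false,true,false,true]} := by
      apply Finset.Subset.antisymm
      · intro a ha
        rw [Finset.mem_filter] at ha
        obtain ⟨haA, hv⟩ := ha
        rw [A5_eq] at haA
        fin_cases haA <;>
          first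
            | decide
            | (exfalso; norm_num [aval_eq, Matrix.cons_val_two, Matrix.cons_val_three, Matrix.cons_val_four, h5] at hv)
      · intro a ha
        fin_cases ha <;> (rw [Finset.mem_filter]; refine ⟨by decide, ?_⟩; norm_num [aval_eq, Matrix.cons_val_two, Matrix.cons_val_three, Matrix.cons_val_four, h5])
    rw [hF] at hsplit
    have hFc : ({![false,false,false,false,false], ![false,false,false,true,true], ![false,false,true,false,true]} : Finset (Fin 5 → Bool)).card = 3 := by decide
    omega

set_option maxHeartbeats 1000000 in
lemma wit14 : ∃ y : Fin 6 → ℝ, y ≠ 0 ∧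
    y 1 ≤ y 0 ∧ y 2 ≤ y 1 ∧ y 3 ≤ y 2 ∧ |y 4| ≤ y 3 ∧
    (∀ a ∈ A5, aval a y ≤ 3 * y 5) ∧
    (A5.filter (fun a => aval a y < 3 * y 5)).card = 14 := by
  use ![3,3,3,1,-1,3]
  have h4 : (![3,3,3,1,-1,3] : Fin 6 → ℝ) 4 = -1 := rfl
  have h5 : (![3,3,3,1,-1,3] : Fin 6 → ℝ) 5 = 3 := rfl
  have hle : ∀ a ∈ A5, aval a ![3,3,3,1,-1,3] ≤ 3 * (![3,3,3,1,-1,3] : Fin 6 → ℝ) 5 := by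
    intro a ha; rw [A5_eq] at ha; fin_cases ha <;> norm_num [aval_eq, Matrix.cons_val_two, Matrix.cons_val_three, Matrix.cons_val_four, h5]
  refine ⟨?_, by norm_num, by norm_num [Matrix.cons_val_two, Matrix.cons_val_three, Matrix.cons_val_four], by norm_num [Matrix.cons_val_two, Matrix.cons_val_three, Matrix.cons_val_four], by rw [h4]; norm_num [Matrix.cons_val_two, Matrix.cons_val_three, Matrix.cons_val_four], hle, ?_⟩
  · intro h; have := congrFun h 0; rw [show (![3,3,3,1,-1,3] : Fin 6 → ℝ) 0 = 3 from rfl] at this; norm_num at this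
  · have hsplit := card_split _ hle
    have hF : A5.filter (fun a => aval a ![3,3,3,1,-1,3] = 3 * (![3,3,3,1,-1,3] : Fin 6 → ℝ) 5)
        = {![false,false,false,false,false], ![false,false,false,true,true]} := by
      apply Finset.Subset.antisymm
      · intro a ha
        rw [Finset.mem_filter] at ha
        obtain ⟨haA, hv⟩ := ha
        rw [A5_eq] at haA
        fin_cases haA <;>
          first
            | decide
            | (exfalso; norm_num [aval_eq, Matrix.cons_val_two, Matrix.cons_val_three, Matrix.cons_val_four, h5] at hv)
      · intro a ha
        fin_cases ha <;> (rw [Finset.mem_filter]; refine ⟨by decide, ?_⟩; norm_num [aval_eq, Matrix.cons_val_two, Matrix.cons_val_three, Matrix.cons_val_four, h5])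
    rw [hF] at hsplit
    have hFc : ({![false,false,false,false,false], ![false,false,false,true,true]} : Finset (Fin 5 → Bool)).card = 2 := by decide
    omega

set_option maxHeartbeats 1000000 in
lemma wit15 : ∃ y : Fin 6 → ℝ, y ≠ 0 ∧
    y 1 ≤ y 0 ∧ y 2 ≤ y 1 ∧ y 3 ≤ y 2 ∧ |y 4| ≤ y 3 ∧
    (∀ a ∈ A5, aval a y ≤ 3 * y 5) ∧
    (A5.filter (fun a => aval a y < 3 * y 5)).card = 15 := by
  use ![1,1,1,1,1,(5/3)]
  have h4 : (![1,1,1,1,1,(5/3)] : Fin 6 → ℝ) 4 = 1 := rfl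
  have h5 : (![1,1,1,1,1,(5/3)] : Fin 6 → ℝ) 5 = (5/3) := rfl
  have hle : ∀ a ∈ A5, aval a ![1,1,1,1,1,(5/3)] ≤ 3 * (![1,1,1,1,1,(5/3)] : Fin 6 → ℝ) 5 := by
    intro a ha; rw [A5_eq] at ha; fin_cases ha <;> norm_num [aval_eq, Matrix.cons_val_two, Matrix.cons_val_three, Matrix.cons_val_four, h5]
  refine ⟨?_, by norm_num, by norm_num [Matrix.cons_val_two, Matrix.cons_val_three, Matrix.cons_val_four], by norm_num [Matrix.cons_val_two, Matrix.cons_val_three, Matrix.cons_val_four], by rw [h4]; norm_num [Matrix.cons_val_two, Matrix.cons_val_three, Matrix.cons_val_four], hle, ?_⟩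
  · intro h; have := congrFun h 0; rw [show (![1,1,1,1,1,(5/3)] : Fin 6 → ℝ) 0 = 1 from rfl] at this; norm_num at this
  · have hsplit := card_split _ hle
    have hF : A5.filter (fun a => aval a ![1,1,1,1,1,(5/3)] = 3 * (![1,1,1,1,1,(5/3)] : Fin 6 → ℝ) 5)
        = {![false,false,false,false,false]} := by
      apply Finset.Subset.antisymm
      · intro a ha
        rw [Finset.mem_filter] at ha
        obtain ⟨haA, hv⟩ := ha
        rw [A5_eq] at haA
        fin_cases haA <;>
          first
            | decide
            | (exfalso; norm_num [aval_eq, Matrix.cons_val_two, Matrix.cons_val_three, Matrix.cons_val_four, h5] at hv)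
      · intro a ha
        fin_cases ha <;> (rw [Finset.mem_filter]; refine ⟨by decide, ?_⟩; norm_num [aval_eq, Matrix.cons_val_two, Matrix.cons_val_three, Matrix.cons_val_four, h5])
    rw [hF] at hsplit
    have hFc : ({![false,false,false,false,false]} : Finset (Fin 5 → Bool)).card = 1 := by decide
    omega

set_option maxHeartbeats 1000000 in
lemma wit16 : ∃ y : Fin 6 → ℝ, y ≠ 0 ∧
    y 1 ≤ y 0 ∧ y 2 ≤ y 1 ∧ y 3 ≤ y 2 ∧ |y 4| ≤ y 3 ∧
    (∀ a ∈ A5, aval a y ≤ 3 * y 5) ∧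
    (A5.filter (fun a => aval a y < 3 * y 5)).card = 16 := by
  use ![0,0,0,0,0,1]
  have h4 : (![0,0,0,0,0,1] : Fin 6 → ℝ) 4 = 0 := rfl
  have h5 : (![0,0,0,0,0,1] : Fin 6 → ℝ) 5 = 1 := rfl
  have hle : ∀ a ∈ A5, aval a ![0,0,0,0,0,1] ≤ 3 * (![0,0,0,0,0,1] : Fin 6 → ℝ) 5 := by
    intro a ha; rw [A5_eq] at ha; fin_cases ha <;> norm_num [aval_eq, Matrix.cons_val_two, Matrix.cons_val_three, Matrix.cons_val_four, h5]
  refine ⟨?_, by norm_num, by norm_num [Matrix.cons_val_two, Matrix.cons_val_three, Matrix.cons_val_four], by norm_num [Matrix.cons_val_two, Matrix.cons_val_three, Matrix.cons_val_four], by rw [h4]; norm_num [Matrix.cons_val_two, Matrix.cons_val_three, Matrix.cons_val_four], hle, ?_⟩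
  · intro h; have := congrFun h 5; rw [show (![0,0,0,0,0,1] : Fin 6 → ℝ) 5 = 1 from rfl] at this; norm_num at this
  · have hsplit := card_split _ hle
    have hF : A5.filter (fun a => aval a ![0,0,0,0,0,1] = 3 * (![0,0,0,0,0,1] : Fin 6 → ℝ) 5) = ∅ := by
      rw [Finset.eq_empty_iff_forall_notMem]
      intro a ha
      rw [Finset.mem_filter] at ha
      obtain ⟨haA, hv⟩ := ha
      rw [A5_eq] at haA
      fin_cases haA <;> norm_num [aval_eq, Matrix.cons_val_two, Matrix.cons_val_three, Matrix.cons_val_four, h5] at hv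
    rw [hF] at hsplit
    rw [Finset.card_empty] at hsplit
    omega

theorem stmt10 (x : Fin 6 → ℝ) (hx : x ≠ 0)
    (h1 : x 1 ≤ x 0) (h2 : x 2 ≤ x 1) (h3 : x 3 ≤ x 2) (h4 : |x 4| ≤ x 3)
    (hle : ∀ a ∈ A5, aval a x ≤ 3 * x 5) :
    (A5.filter (fun a => aval a x < 3 * x 5)).card
      ∈ ({8, 11, 12, 13, 14, 15, 16} : Finset ℕ) ∧
    ∀ k ∈ ({8, 11, 12, 13, 14, 15, 16} : Finset ℕ), ∃ y : Fin 6 → ℝ, y ≠ 0 ∧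
      y 1 ≤ y 0 ∧ y 2 ≤ y 1 ∧ y 3 ≤ y 2 ∧ |y 4| ≤ y 3 ∧
      (∀ a ∈ A5, aval a y ≤ 3 * y 5) ∧
      (A5.filter (fun a => aval a y < 3 * y 5)).card = k := by
  refine ⟨main_mem x hx h1 h2 h3 h4 hle, ?_⟩
  intro k hk
  simp only [Finset.mem_insert, Finset.mem_singleton] at hk
  rcases hk with rfl | rfl | rfl | rfl | rfl | rfl | rfl
  · exact wit8
  · exact wit11
  · exact wit12
  · exact wit13
  · exact wit14
  · exact wit15
  · exact wit16
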